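/- Let φ be a Bernstein function. Then for all z with Re(z) > 0, |φ''(z)| ≤ 4 φ(Re(z)) / (Re(z))², and consequently |φ''(z)|/|φ(z)| ≤ 4/(Re(z))². -/

import Mathlib

open MeasureTheory Set Filter
open Topology

-- key pointwise inequality
lemma key_ineq {t : ℝ} (ht : 0 ≤ t) : t ^ 2 * Real.exp (-t) ≤ 4 * (1 - Real.exp (-t)) := by
  have h1 : 1 + t + t ^ 2 / 2 ≤ Real.exp t := Real.quadratic_le_exp_of_nonneg ht
  have h2 : Real.exp (-t) * Real.exp t = 1 := by
    rw [← Real.exp_add]; simp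
  have h3 : 0 < Real.exp (-t) := Real.exp_pos _
  nlinarith [mul_le_mul_of_nonneg_left h1 h3.le]

-- cubic lower bound for exp
lemma cubic_le_exp {t : ℝ} (ht : 0 ≤ t) : t ^ 3 / 6 ≤ Real.exp t := by
  have := Real.sum_le_exp_of_nonneg ht 4
  simp [Finset.sum_range_succ] at this
  norm_num [Nat.factorial] at this
  nlinarith [this, sq_nonneg t]

-- integrability from min-bound
lemma integrableOn_of_min_bound {E : Type*} [NormedAddCommGroup E]
    {μ : Measure ℝ} (hμ : ∫⁻ y in Set.Ioi (0:ℝ), ENNReal.ofReal (min y 1) ∂μ < ⊤)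
    {f : ℝ → E} (hm : AEStronglyMeasurable f (μ.restrict (Set.Ioi 0)))
    {C : ℝ} (hC : 0 ≤ C) (hb : ∀ y ∈ Set.Ioi (0:ℝ), ‖f y‖ ≤ C * min y 1) :
    IntegrableOn f (Set.Ioi 0) μ := by
  refine ⟨hm, ?_⟩
  have hb' : ∀ᵐ y ∂(μ.restrict (Set.Ioi 0)), ‖f y‖ ≤ C * min y 1 :=
    (ae_restrict_iff' measurableSet_Ioi).2 (Filter.Eventually.of_forall hb)
  calc ∫⁻ y in Set.Ioi (0:ℝ), ‖f y‖₊ ∂μ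
      ≤ ∫⁻ y in Set.Ioi (0:ℝ), ENNReal.ofReal (C * min y 1) ∂μ := by
        refine lintegral_mono_ae (hb'.mono fun y hy => ?_)
        rw [show (‖f y‖₊ : ENNReal) = ENNReal.ofReal ‖f y‖ from (ofReal_norm _).symm]
        exact ENNReal.ofReal_le_ofReal hy
    _ = ∫⁻ y in Set.Ioi (0:ℝ), ENNReal.ofReal C * ENNReal.ofReal (min y 1) ∂μ := by
        refine lintegral_congr fun y => ?_
        rw [ENNReal.ofReal_mul hC]
    _ = ENNReal.ofReal C * ∫⁻ y in Set.Ioi (0:ℝ), ENNReal.ofReal (min y 1) ∂μ :=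
        lintegral_const_mul' _ _ ENNReal.ofReal_ne_top
    _ < ⊤ := ENNReal.mul_lt_top ENNReal.ofReal_lt_top hμ

lemma bound1 {a y : ℝ} (ha : 0 < a) (hy : 0 < y) :
    y * Real.exp (-(a * y)) ≤ (1 + 2 / a ^ 2) * min y 1 := by
  have hexp : Real.exp (-(a*y)) ≤ 1 := Real.exp_le_one_iff.2 (by nlinarith)
  have hq : (a*y) ^ 2 / 2 ≤ Real.exp (a*y) := by
    nlinarith [Real.quadratic_le_exp_of_nonneg (by positivity : (0:ℝ) ≤ a*y)]
  have hinv : Real.exp (-(a*y)) * Real.exp (a*y) = 1 := by rw [← Real.exp_add]; simp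
  rcases le_total y 1 with h | h
  · rw [min_eq_left h]
    have : y * Real.exp (-(a*y)) ≤ y * 1 := by
      exact mul_le_mul_of_nonneg_left hexp hy.le
    nlinarith [sq_nonneg a, div_nonneg (by norm_num : (0:ℝ) ≤ 2) (sq_nonneg a)]
  · rw [min_eq_right h]
    have he : 0 < Real.exp (-(a*y)) := Real.exp_pos _
    have h1 : y * Real.exp (-(a*y)) ≤ 2 / a ^ 2 := by
      rw [le_div_iff₀ (by positivity : (0:ℝ) < a ^ 2)]
      nlinarith [mul_le_mul_of_nonneg_left hq he.le, hinv,
        mul_nonneg (mul_nonneg he.le (sq_nonneg a)) hy.le]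
    have : (0:ℝ) ≤ 2 / a ^ 2 := by positivity
    linarith

lemma bound2 {a y : ℝ} (ha : 0 < a) (hy : 0 < y) :
    y ^ 2 * Real.exp (-(a * y)) ≤ (1 + 6 / a ^ 3) * min y 1 := by
  have hexp : Real.exp (-(a*y)) ≤ 1 := Real.exp_le_one_iff.2 (by nlinarith)
  have hq : (a*y) ^ 3 / 6 ≤ Real.exp (a*y) := cubic_le_exp (by positivity)
  have hinv : Real.exp (-(a*y)) * Real.exp (a*y) = 1 := by rw [← Real.exp_add]; simp
  have he : 0 < Real.exp (-(a*y)) := Real.exp_pos _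
  have hc : (0:ℝ) ≤ 6 / a ^ 3 := by positivity
  rcases le_total y 1 with h | h
  · rw [min_eq_left h]
    have : y ^ 2 * Real.exp (-(a*y)) ≤ y ^ 2 := by nlinarith
    nlinarith
  · rw [min_eq_right h]
    have h1 : y ^ 2 * Real.exp (-(a*y)) ≤ 6 / a ^ 3 := by
      rw [le_div_iff₀ (by positivity : (0:ℝ) < a ^ 3)]
      nlinarith [mul_le_mul_of_nonneg_left hq he.le, hinv,
        mul_nonneg (mul_nonneg (mul_nonneg he.le (pow_nonneg ha.le 3)) hy.le) hy.le]
    linarith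

lemma hd_F (y : ℝ) (w : ℂ) :
    HasDerivAt (fun z : ℂ => 1 - Complex.exp (-(z * y))) ((y:ℂ) * Complex.exp (-(w * y))) w := by
  have h : HasDerivAt (fun z : ℂ => -(z * (y:ℂ))) (-(y:ℂ)) w := by
    simpa [Pi.neg_def] using ((hasDerivAt_id w).mul_const (y:ℂ)).neg
  have h2 := h.cexp
  have h3 := h2.const_sub 1
  rw [show (y:ℂ) * Complex.exp (-(w * y)) = -(Complex.exp (-(w * y)) * -(y:ℂ)) by ring]
  exact h3

lemma hd_F1 (y : ℝ) (w : ℂ) :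
    HasDerivAt (fun z : ℂ => (y:ℂ) * Complex.exp (-(z * y)))
      (-((y:ℂ) ^ 2 * Complex.exp (-(w * y)))) w := by
  have h : HasDerivAt (fun z : ℂ => -(z * (y:ℂ))) (-(y:ℂ)) w := by
    simpa [Pi.neg_def] using ((hasDerivAt_id w).mul_const (y:ℂ)).neg
  have h2 := h.cexp.const_mul (y:ℂ)
  rw [show -((y:ℂ) ^ 2 * Complex.exp (-(w * y))) = (y:ℂ) * (Complex.exp (-(w * y)) * -(y:ℂ)) by ring]
  exact h2

lemma norm_F1 (y : ℝ) (hy : 0 ≤ y) (w : ℂ) :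
    ‖(y:ℂ) * Complex.exp (-(w * y))‖ = y * Real.exp (-(w.re * y)) := by
  simp [map_mul, Complex.norm_real, abs_of_nonneg hy,
    Complex.norm_exp, Complex.mul_re]

lemma norm_F2 (y : ℝ) (hy : 0 ≤ y) (w : ℂ) :
    ‖-((y:ℂ) ^ 2 * Complex.exp (-(w * y)))‖ = y ^ 2 * Real.exp (-(w.re * y)) := by
  rw [norm_neg]
  simp [map_mul, map_pow, Complex.norm_real, abs_of_nonneg hy,
    Complex.norm_exp, Complex.mul_re]

lemma re_of_mem_ball {z w : ℂ} (h : w ∈ Metric.ball z (z.re / 2)) : z.re / 2 ≤ w.re := by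
  have h1 : |(w - z).re| ≤ ‖w - z‖ := Complex.abs_re_le_norm _
  rw [Complex.sub_re] at h1
  have h2 : ‖w - z‖ < z.re / 2 := by
    simpa [Metric.mem_ball, Complex.dist_eq] using h
  have := (abs_lt.1 (lt_of_le_of_lt h1 h2)).1
  linarith

lemma int_min {μ : Measure ℝ} (hμ : ∫⁻ y in Set.Ioi (0:ℝ), ENNReal.ofReal (min y 1) ∂μ < ⊤)
    {C : ℝ} (hC : 0 ≤ C) :
    Integrable (fun y => C * min y 1) (μ.restrict (Set.Ioi 0)) := by
  refine integrableOn_of_min_bound hμ ?_ hC fun y hy => ?_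
  · exact (Continuous.aestronglyMeasurable (by continuity))
  · rw [Real.norm_eq_abs, abs_of_nonneg (mul_nonneg hC (le_min (le_of_lt hy) zero_le_one))]

lemma contF (w : ℂ) : Continuous (fun y : ℝ => 1 - Complex.exp (-(w * y))) := by
  continuity

lemma contF1 (w : ℂ) : Continuous (fun y : ℝ => (y:ℂ) * Complex.exp (-(w * y))) := by
  continuity

lemma contF2 (w : ℂ) : Continuous (fun y : ℝ => -((y:ℂ) ^ 2 * Complex.exp (-(w * y)))) := by
  continuity

lemma hasDeriv1 {μ : Measure ℝ}
    (hμ : ∫⁻ y in Set.Ioi (0:ℝ), ENNReal.ofReal (min y 1) ∂μ < ⊤)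
    {z : ℂ} (hz : 0 < z.re)
    (hintz : IntegrableOn (fun y : ℝ => 1 - Complex.exp (-(z * (y:ℂ)))) (Set.Ioi 0) μ) :
    IntegrableOn (fun y : ℝ => (y:ℂ) * Complex.exp (-(z * (y:ℂ)))) (Set.Ioi 0) μ ∧
    HasDerivAt (fun w => ∫ y in Set.Ioi (0:ℝ), (1 - Complex.exp (-(w * (y:ℂ)))) ∂μ)
      (∫ y in Set.Ioi (0:ℝ), (y:ℂ) * Complex.exp (-(z * (y:ℂ))) ∂μ) z := by
  have ha : 0 < z.re / 2 := half_pos hz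
  exact hasDerivAt_integral_of_dominated_loc_of_deriv_le
    (F := fun w (y : ℝ) => 1 - Complex.exp (-(w * (y:ℂ))))
    (F' := fun w (y : ℝ) => (y:ℂ) * Complex.exp (-(w * (y:ℂ))))
    (bound := fun y => (1 + 2 / (z.re / 2) ^ 2) * min y 1)
    (Metric.ball_mem_nhds z ha)
    (Filter.Eventually.of_forall fun w => (contF w).aestronglyMeasurable)
    hintz
    ((contF1 z).aestronglyMeasurable)
    ((ae_restrict_iff' measurableSet_Ioi).2 (Filter.Eventually.of_forall fun y hy w hw => by
      rw [norm_F1 y (le_of_lt hy) w]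
      refine le_trans ?_ (bound1 ha hy)
      have hre := re_of_mem_ball hw
      have : Real.exp (-(w.re * y)) ≤ Real.exp (-(z.re / 2 * y)) := by
        apply Real.exp_le_exp.2; nlinarith [mem_Ioi.1 hy]
      nlinarith [le_of_lt (mem_Ioi.1 hy)]))
    (int_min hμ (by positivity))
    (Filter.Eventually.of_forall fun y w hw => hd_F y w)

lemma hasDeriv2 {μ : Measure ℝ}
    (hμ : ∫⁻ y in Set.Ioi (0:ℝ), ENNReal.ofReal (min y 1) ∂μ < ⊤)
    {z : ℂ} (hz : 0 < z.re)
    (hint1 : IntegrableOn (fun y : ℝ => (y:ℂ) * Complex.exp (-(z * (y:ℂ)))) (Set.Ioi 0) μ) :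
    IntegrableOn (fun y : ℝ => -((y:ℂ) ^ 2 * Complex.exp (-(z * (y:ℂ))))) (Set.Ioi 0) μ ∧
    HasDerivAt (fun w => ∫ y in Set.Ioi (0:ℝ), (y:ℂ) * Complex.exp (-(w * (y:ℂ))) ∂μ)
      (∫ y in Set.Ioi (0:ℝ), -((y:ℂ) ^ 2 * Complex.exp (-(z * (y:ℂ)))) ∂μ) z := by
  have ha : 0 < z.re / 2 := half_pos hz
  exact hasDerivAt_integral_of_dominated_loc_of_deriv_le
    (F := fun w (y : ℝ) => (y:ℂ) * Complex.exp (-(w * (y:ℂ))))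
    (F' := fun w (y : ℝ) => -((y:ℂ) ^ 2 * Complex.exp (-(w * (y:ℂ)))))
    (bound := fun y => (1 + 6 / (z.re / 2) ^ 3) * min y 1)
    (Metric.ball_mem_nhds z ha)
    (Filter.Eventually.of_forall fun w => (contF1 w).aestronglyMeasurable)
    hint1
    ((contF2 z).aestronglyMeasurable)
    ((ae_restrict_iff' measurableSet_Ioi).2 (Filter.Eventually.of_forall fun y hy w hw => by
      rw [norm_F2 y (le_of_lt hy) w]
      refine le_trans ?_ (bound2 ha hy)
      have hre := re_of_mem_ball hw
      have : Real.exp (-(w.re * y)) ≤ Real.exp (-(z.re / 2 * y)) := by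
        apply Real.exp_le_exp.2; nlinarith [mem_Ioi.1 hy]
      nlinarith [sq_nonneg y]))
    (int_min hμ (by positivity))
    (Filter.Eventually.of_forall fun y w hw => hd_F1 y w)


set_option maxHeartbeats 1000000 in
theorem bernstein_second_deriv_bound
    (q d : ℝ) (hq : 0 ≤ q) (hd : 0 ≤ d)
    (μ : Measure ℝ)
    (hμ : ∫⁻ y in Set.Ioi (0:ℝ), ENNReal.ofReal (min y 1) ∂μ < ⊤)
    (hnz : 0 < q ∨ 0 < d ∨ 0 < μ (Set.Ioi (0:ℝ)))
    (φ : ℂ → ℂ)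
    (hφ : ∀ z : ℂ, 0 < z.re →
      φ z = (q : ℂ) + (d : ℂ) * z
        + ∫ y in Set.Ioi (0:ℝ), (1 - Complex.exp (-(z * (y : ℂ)))) ∂μ)
    (hint : ∀ z : ℂ, 0 < z.re →
      IntegrableOn (fun y : ℝ => 1 - Complex.exp (-(z * (y : ℂ)))) (Set.Ioi 0) μ) :
    ∀ z : ℂ, 0 < z.re →
      ‖iteratedDeriv 2 φ z‖ ≤ 4 * (φ ((z.re : ℂ))).re / z.re ^ 2
      ∧ ‖iteratedDeriv 2 φ z‖ / ‖φ z‖ ≤ 4 / z.re ^ 2 := by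
  intro z hz
  set x := z.re with hxdef
  have hxpos : 0 < x := hz
  have hUopen : IsOpen {w : ℂ | 0 < w.re} := isOpen_lt continuous_const Complex.continuous_re
  set Ψ : ℂ → ℂ := fun w => (q : ℂ) + (d : ℂ) * w
      + ∫ y in Set.Ioi (0:ℝ), (1 - Complex.exp (-(w * (y : ℂ)))) ∂μ with hΨdef
  set Ψ1 : ℂ → ℂ := fun w => (d : ℂ)
      + ∫ y in Set.Ioi (0:ℝ), (y:ℂ) * Complex.exp (-(w * (y : ℂ))) ∂μ with hΨ1def
  have hΨd : ∀ w : ℂ, 0 < w.re → HasDerivAt Ψ (Ψ1 w) w := fun w hw => by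
    have h1 := (hasDeriv1 hμ hw (hint w hw)).2
    have h0 : HasDerivAt (fun u : ℂ => (q:ℂ) + (d:ℂ) * u) (d:ℂ) w := by
      simpa using ((hasDerivAt_id w).const_mul (d:ℂ)).const_add (q:ℂ)
    exact h0.add h1
  have hderiv_eq : ∀ w : ℂ, 0 < w.re → deriv φ w = Ψ1 w := fun w hw => by
    have hev : φ =ᶠ[𝓝 w] Ψ :=
      Filter.eventually_of_mem (hUopen.mem_nhds hw) fun u hu => hφ u hu
    rw [hev.deriv_eq, (hΨd w hw).deriv]
  have hint1 := (hasDeriv1 hμ hz (hint z hz)).1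
  have h2 := (hasDeriv2 hμ hz hint1).2
  have hΨ1d : HasDerivAt Ψ1
      (∫ y in Set.Ioi (0:ℝ), -((y:ℂ)^2 * Complex.exp (-(z * (y:ℂ)))) ∂μ) z := by
    exact h2.const_add (d:ℂ)
  have hit : iteratedDeriv 2 φ z
      = ∫ y in Set.Ioi (0:ℝ), -((y:ℂ)^2 * Complex.exp (-(z * (y:ℂ)))) ∂μ := by
    have hev1 : deriv φ =ᶠ[𝓝 z] Ψ1 :=
      Filter.eventually_of_mem (hUopen.mem_nhds hz) fun u hu => hderiv_eq u hu
    rw [show (2:ℕ) = 1 + 1 from rfl, iteratedDeriv_succ, iteratedDeriv_one]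
    rw [hev1.deriv_eq, hΨ1d.deriv]
  -- real integrands
  set g : ℝ → ℝ := fun y => y ^ 2 * Real.exp (-(x * y)) with hgdef
  set f0 : ℝ → ℝ := fun y => 1 - Real.exp (-(x * y)) with hf0def
  have hre0 : ∀ y : ℝ, (1 - Complex.exp (-((x:ℂ) * (y:ℂ)))).re = f0 y := fun y => by
    show (1 - Complex.exp (-((x:ℂ) * (y:ℂ)))).re = 1 - Real.exp (-(x * y))
    rw [show -((x:ℂ) * (y:ℂ)) = ((-(x*y):ℝ):ℂ) by push_cast; ring,
      Complex.sub_re, Complex.one_re, Complex.exp_ofReal_re]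
  have hxre : ((x:ℂ)).re = x := Complex.ofReal_re x
  have hintx := hint (x:ℂ) (by simpa using hxpos)
  have hf0int : IntegrableOn f0 (Set.Ioi 0) μ := by
    have := hintx.re
    refine this.congr (Filter.Eventually.of_forall fun y => ?_)
    simpa using (hre0 y)
  have hgint : IntegrableOn g (Set.Ioi 0) μ := by
    refine integrableOn_of_min_bound hμ (Continuous.aestronglyMeasurable (by continuity))
      (C := 1 + 6 / x ^ 3) (by positivity) fun y hy => ?_
    rw [Real.norm_eq_abs, abs_of_nonneg (by positivity)]
    exact bound2 hxpos hy
  have hf0nonneg : ∀ y ∈ Set.Ioi (0:ℝ), 0 ≤ f0 y := fun y hy => by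
    have : Real.exp (-(x * y)) ≤ 1 := Real.exp_le_one_iff.2 (by nlinarith [mem_Ioi.1 hy])
    show 0 ≤ 1 - Real.exp (-(x * y))
    linarith
  have hf0_int_nonneg : 0 ≤ ∫ y in Set.Ioi (0:ℝ), f0 y ∂μ :=
    setIntegral_nonneg measurableSet_Ioi hf0nonneg
  -- |φ''| ≤ ∫ g
  have habs_le : ‖iteratedDeriv 2 φ z‖ ≤ ∫ y in Set.Ioi (0:ℝ), g y ∂μ := by
    rw [hit]
    refine norm_integral_le_of_norm_le hgint
      ((ae_restrict_iff' measurableSet_Ioi).2 (Filter.Eventually.of_forall fun y hy => ?_))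
    rw [norm_F2 y (le_of_lt hy) z]
  -- ∫ g ≤ (4/x²) ∫ f0
  have hg_le : ∫ y in Set.Ioi (0:ℝ), g y ∂μ
      ≤ 4 / x ^ 2 * ∫ y in Set.Ioi (0:ℝ), f0 y ∂μ := by
    rw [← integral_const_mul]
    refine setIntegral_mono_on hgint (hf0int.const_mul _) measurableSet_Ioi fun y hy => ?_
    have hy0 : 0 < y := mem_Ioi.1 hy
    have hk := key_ineq (t := x * y) (by positivity)
    have hx2 : (0:ℝ) < x ^ 2 := by positivity
    rw [hgdef]
    simp only [hf0def]
    rw [div_mul_eq_mul_div, le_div_iff₀ hx2]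
    nlinarith [hk]
  -- value of φ at x
  have hφx : (φ ((x:ℂ))).re = q + d * x + ∫ y in Set.Ioi (0:ℝ), f0 y ∂μ := by
    rw [hφ (x:ℂ) (by simpa using hxpos)]
    have hre_int : (∫ y in Set.Ioi (0:ℝ), (1 - Complex.exp (-((x:ℂ) * (y:ℂ)))) ∂μ).re
        = ∫ y in Set.Ioi (0:ℝ), f0 y ∂μ := by
      have h := integral_re (μ := μ.restrict (Set.Ioi 0)) hintx
      simp only [RCLike.re_to_complex] at h
      rw [← h]
      exact setIntegral_congr_fun measurableSet_Ioi fun y _ => hre0 y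
    simp [Complex.add_re, Complex.mul_re, hre_int]
  have hφx_pos : 0 < (φ ((x:ℂ))).re := by
    rw [hφx]
    rcases hnz with hq' | hd' | hμ'
    · nlinarith [mul_nonneg hd hxpos.le, hf0_int_nonneg]
    · nlinarith [hf0_int_nonneg]
    · have hsub : Set.Ioi (0:ℝ) ⊆ Function.support f0 := fun y hy => by
        have hy0 : 0 < y := hy
        have : Real.exp (-(x * y)) < 1 := Real.exp_lt_one_iff.2 (by nlinarith)
        simp only [Function.mem_support, hf0def]
        intro h; linarith [sub_eq_zero.1 h]
      have hpos : 0 < ∫ y in Set.Ioi (0:ℝ), f0 y ∂μ := by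
        rw [setIntegral_pos_iff_support_of_nonneg_ae
          ((ae_restrict_iff' measurableSet_Ioi).2 (Filter.Eventually.of_forall hf0nonneg))
          hf0int]
        rwa [Set.inter_eq_right.2 hsub]
      nlinarith [mul_nonneg hd hxpos.le]
  have hf0_le : ∫ y in Set.Ioi (0:ℝ), f0 y ∂μ ≤ (φ ((x:ℂ))).re := by
    rw [hφx]; nlinarith [mul_nonneg hd hxpos.le]
  have part1 : ‖iteratedDeriv 2 φ z‖ ≤ 4 * (φ ((x:ℂ))).re / x ^ 2 := by
    calc ‖iteratedDeriv 2 φ z‖ ≤ ∫ y in Set.Ioi (0:ℝ), g y ∂μ := habs_le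
      _ ≤ 4 / x ^ 2 * ∫ y in Set.Ioi (0:ℝ), f0 y ∂μ := hg_le
      _ ≤ 4 / x ^ 2 * (φ ((x:ℂ))).re :=
          mul_le_mul_of_nonneg_left hf0_le (by positivity)
      _ = 4 * (φ ((x:ℂ))).re / x ^ 2 := by ring
  refine ⟨part1, ?_⟩
  -- lower bound on |φ z|
  have hre_le : (φ ((x:ℂ))).re ≤ (φ z).re := by
    rw [hφ z hz, hφx]
    have hre_int : (∫ y in Set.Ioi (0:ℝ), (1 - Complex.exp (-(z * (y:ℂ)))) ∂μ).re
        = ∫ y in Set.Ioi (0:ℝ), (1 - Complex.exp (-(z * (y:ℂ)))).re ∂μ := by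
      have h := integral_re (μ := μ.restrict (Set.Ioi 0)) (hint z hz)
      simp only [RCLike.re_to_complex] at h
      rw [← h]
    have hmono : ∫ y in Set.Ioi (0:ℝ), f0 y ∂μ
        ≤ ∫ y in Set.Ioi (0:ℝ), (1 - Complex.exp (-(z * (y:ℂ)))).re ∂μ := by
      refine setIntegral_mono_on hf0int ((hint z hz).re) measurableSet_Ioi fun y hy => ?_
      have hy0 : 0 < y := mem_Ioi.1 hy
      have h1 : (Complex.exp (-(z * (y:ℂ)))).re ≤ ‖Complex.exp (-(z * (y:ℂ)))‖ :=
        Complex.re_le_norm _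
      have h2 : ‖Complex.exp (-(z * (y:ℂ)))‖ = Real.exp (-(x * y)) := by
        rw [Complex.norm_exp]
        congr 1
        simp [Complex.mul_re, hxdef]
      simp only [Complex.sub_re, Complex.one_re, hf0def]
      rw [h2] at h1
      linarith
    simp only [Complex.add_re, Complex.mul_re, Complex.ofReal_re, Complex.ofReal_im,
      hre_int]
    simp only [hxdef]
    nlinarith [hmono]
  have habs_ge : (φ ((x:ℂ))).re ≤ ‖φ z‖ :=
    le_trans hre_le (Complex.re_le_norm _)
  have hden : 0 < ‖φ z‖ := lt_of_lt_of_le hφx_pos habs_ge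
  have hfinal : ‖iteratedDeriv 2 φ z‖ / ‖φ z‖
      ≤ (4 * (φ ((x:ℂ))).re / x ^ 2) / (φ ((x:ℂ))).re :=
    div_le_div₀ (by positivity) part1 hφx_pos habs_ge
  have heq : (4 * (φ ((x:ℂ))).re / x ^ 2) / (φ ((x:ℂ))).re = 4 / x ^ 2 := by
    field_simp
  rw [heq] at hfinal
  exact hfinal
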